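/- If a nonnegative random variable X satisfies P(X > t) ~ K t^{-α} as t → ∞ with α > 1, then the Conditional Tail Expectation CoTE_{1-γ}(X) := E[X | X > VaR_{1-γ}(X)] satisfies CoTE_{1-γ}(X) ~ (α/(α-1)) K^{1/α} γ^{-1/α} as γ → 0. -/

import Mathlib

open MeasureTheory Filter Set

lemma aux_shift_integral (f : ℝ → ℝ) (w : ℝ) :
    ∫ t in Ioi (0:ℝ), f (w + t) = ∫ t in Ioi w, f t := by
  have hmp : MeasurePreserving (fun t : ℝ => w + t) volume volume :=
    measurePreserving_add_left volume w
  have hemb : MeasurableEmbedding (fun t : ℝ => w + t) :=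
    (MeasurableEquiv.addLeft w).measurableEmbedding
  have hpre : (fun t : ℝ => w + t) ⁻¹' (Ioi w) = Ioi 0 := by
    ext t; simp [Set.mem_preimage, Set.mem_Ioi]
  rw [← hpre, hmp.setIntegral_preimage_emb hemb]

lemma aux_shift_integrableOn {f : ℝ → ℝ} {w : ℝ} (h : IntegrableOn f (Ioi w)) :
    IntegrableOn (fun t => f (w + t)) (Ioi (0:ℝ)) := by
  have hmp : MeasurePreserving (fun t : ℝ => w + t) volume volume :=
    measurePreserving_add_left volume w
  have hemb : MeasurableEmbedding (fun t : ℝ => w + t) :=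
    (MeasurableEquiv.addLeft w).measurableEmbedding
  have hpre : (fun t : ℝ => w + t) ⁻¹' (Ioi w) = Ioi 0 := by
    ext t; simp [Set.mem_preimage, Set.mem_Ioi]
  have := (hmp.integrableOn_comp_preimage hemb (f := f) (s := Ioi w)).2 h
  rwa [hpre] at this

/-- Value-at-Risk at confidence level `1 - γ`. -/
noncomputable def VaR {Ω : Type*} [MeasurableSpace Ω] (ℙ : Measure Ω)
    (X : Ω → ℝ) (γ : ℝ) : ℝ :=
  sInf {t : ℝ | 0 ≤ t ∧ (ℙ {ω | X ω > t}).toReal ≤ γ}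

/-- Conditional Tail Expectation: `CoTE_{1-γ}(X) = E[X | X > VaR_{1-γ}(X)]`. -/
noncomputable def CoTE {Ω : Type*} [MeasurableSpace Ω] (ℙ : Measure Ω)
    (X : Ω → ℝ) (γ : ℝ) : ℝ :=
  (∫ ω in {ω | X ω > VaR ℙ X γ}, X ω ∂ℙ) / (ℙ {ω | X ω > VaR ℙ X γ}).toReal

/-- If `P(X > t) ~ K t^{-α}` with `α > 1`, then
`CoTE_{1-γ}(X) ~ (α/(α-1)) K^{1/α} γ^{-1/α}` as `γ → 0`. -/
theorem cote_asymptotics_pareto_tail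
    {Ω : Type*} [MeasurableSpace Ω] (ℙ : Measure Ω) [IsProbabilityMeasure ℙ]
    (X : Ω → ℝ) (hXmeas : Measurable X) (hX : ∀ ω, 0 ≤ X ω)
    (K α : ℝ) (hK : 0 < K) (hα : 1 < α)
    (htail : Tendsto (fun t : ℝ => t ^ α * (ℙ {ω | X ω > t}).toReal)
      atTop (nhds K)) :
    Tendsto (fun γ : ℝ => γ ^ (1 / α) * CoTE ℙ X γ)
      (nhdsWithin 0 (Ioi 0)) (nhds (α / (α - 1) * K ^ (1 / α))) := by
  have hα0 : (0:ℝ) < α := lt_trans one_pos hα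
  have hα1 : (0:ℝ) < α - 1 := by linarith
  set F : ℝ → ℝ := fun t => (ℙ {ω | X ω > t}).toReal with hF
  have hFanti : Antitone F := by
    intro s t hst
    exact ENNReal.toReal_mono (measure_ne_top _ _)
      (measure_mono (fun ω hω => lt_of_le_of_lt hst hω))
  have hFmeas : Measurable F := hFanti.measurable
  have hFnonneg : ∀ t, 0 ≤ F t := fun t => ENNReal.toReal_nonneg
  -- F tends to 0 at infinity
  have hF0 : Tendsto F atTop (nhds 0) := by
    have h1 : Tendsto (fun t : ℝ => (t ^ α * F t) * t ^ (-α)) atTop (nhds (K * 0)) :=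
      htail.mul (tendsto_rpow_neg_atTop hα0)
    rw [mul_zero] at h1
    refine Tendsto.congr' ?_ h1
    filter_upwards [eventually_gt_atTop (0:ℝ)] with t ht
    rw [Real.rpow_neg ht.le, mul_comm (t ^ α) (F t), mul_assoc,
      mul_inv_cancel₀ (ne_of_gt (Real.rpow_pos_of_pos ht α)), mul_one]
  set v : ℝ → ℝ := fun γ => VaR ℙ X γ with hv
  have hSbdd : ∀ γ : ℝ, BddBelow {t : ℝ | 0 ≤ t ∧ F t ≤ γ} :=
    fun γ => ⟨0, fun t ht => ht.1⟩
  have hSne : ∀ γ : ℝ, 0 < γ → {t : ℝ | 0 ≤ t ∧ F t ≤ γ}.Nonempty := by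
    intro γ hγ
    obtain ⟨t, h1, h2⟩ := ((hF0.eventually_lt_const hγ).and (eventually_ge_atTop (0:ℝ))).exists
    exact ⟨t, h2, h1.le⟩
  have hveq : ∀ γ : ℝ, v γ = sInf {t : ℝ | 0 ≤ t ∧ F t ≤ γ} := fun _ => rfl
  have hv0 : ∀ γ : ℝ, 0 < γ → 0 ≤ v γ := by
    intro γ hγ
    rw [hveq]
    exact le_csInf (hSne γ hγ) (fun t ht => ht.1)
  have hv2 : ∀ γ : ℝ, 0 < γ → ∀ t : ℝ, 0 ≤ t → t < v γ → γ < F t := by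
    intro γ hγ t ht0 htv
    by_contra h
    push_neg at h
    have := csInf_le (hSbdd γ) (Set.mem_setOf.2 ⟨ht0, h⟩)
    rw [← hveq] at this
    exact absurd this (not_le.2 htv)
  have hv1 : ∀ γ : ℝ, 0 < γ → F (v γ) ≤ γ := by
    intro γ hγ
    have key : ∀ n : ℕ, (ℙ {ω | X ω > v γ + 1/(n+1)}) ≤ ENNReal.ofReal γ := by
      intro n
      have hpos : (0:ℝ) < 1/(n+1) := by positivity
      have hlt : sInf {t : ℝ | 0 ≤ t ∧ F t ≤ γ} < v γ + 1/(n+1) := by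
        rw [← hveq]; linarith
      obtain ⟨u, hu, hult⟩ := (csInf_lt_iff (hSbdd γ) (hSne γ hγ)).1 hlt
      have h2 : F (v γ + 1/(n+1)) ≤ γ := le_trans (hFanti hult.le) hu.2
      calc (ℙ {ω | X ω > v γ + 1/(n+1)})
          = ENNReal.ofReal (F (v γ + 1/(n+1))) := by
            rw [hF]; exact (ENNReal.ofReal_toReal (measure_ne_top _ _)).symm
        _ ≤ ENNReal.ofReal γ := ENNReal.ofReal_le_ofReal h2
    have hUnion : {ω | X ω > v γ} = ⋃ n : ℕ, {ω | X ω > v γ + 1/(n+1)} := by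
      ext ω
      simp only [mem_setOf_eq, mem_iUnion]
      constructor
      · intro h
        obtain ⟨n, hn⟩ := exists_nat_one_div_lt (sub_pos.2 h)
        exact ⟨n, by linarith⟩
      · rintro ⟨n, hn⟩
        have : (0:ℝ) < 1/(n+1) := by positivity
        linarith
    have hmono : Monotone (fun n : ℕ => {ω | X ω > v γ + 1/(n+1)}) := by
      intro m n hmn ω hω
      simp only [mem_setOf_eq] at *
      have h1 : ((m:ℝ)+1) ≤ ((n:ℝ)+1) := by
        have := (Nat.cast_le (α := ℝ)).2 hmn; linarith
      have h2 : (1:ℝ)/(n+1) ≤ 1/(m+1) := one_div_le_one_div_of_le (by positivity) h1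
      linarith
    have : (ℙ {ω | X ω > v γ}) ≤ ENNReal.ofReal γ := by
      rw [hUnion, hmono.measure_iUnion]
      exact iSup_le key
    rw [hF]
    exact ENNReal.toReal_le_of_le_ofReal hγ.le this
  -- VaR tends to infinity
  have hvtop : Tendsto v (nhdsWithin (0:ℝ) (Ioi 0)) atTop := by
    rw [tendsto_atTop]
    intro M
    have hev : ∀ᶠ t : ℝ in atTop, K/2 < t ^ α * F t :=
      htail.eventually_const_lt (half_lt_self hK)
    obtain ⟨t0, h1, h2⟩ := (hev.and (eventually_ge_atTop (max M 1))).exists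
    have ht0M : M ≤ t0 := le_trans (le_max_left M 1) h2
    have ht0pos : (0:ℝ) < t0 := lt_of_lt_of_le one_pos (le_trans (le_max_right M 1) h2)
    have hFt0 : 0 < F t0 := by
      by_contra h
      push_neg at h
      have h0 : F t0 = 0 := le_antisymm h (hFnonneg t0)
      rw [h0, mul_zero] at h1
      linarith
    filter_upwards [Ioo_mem_nhdsGT_of_mem (Set.left_mem_Ico.2 hFt0)] with γ hγ
    have ht0le : t0 ≤ v γ := by
      rw [hveq]
      refine le_csInf (hSne γ hγ.1) (fun b hb => ?_)
      by_contra hbt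
      push_neg at hbt
      exact absurd hb.2 (not_le.2 (lt_of_lt_of_le hγ.2 (hFanti hbt.le)))
    linarith
  have hvF : Tendsto (fun γ => (v γ) ^ α * F (v γ)) (nhdsWithin (0:ℝ) (Ioi 0)) (nhds K) :=
    htail.comp hvtop
  -- v γ ^ α * γ → K
  have hφ : Tendsto (fun γ => (v γ) ^ α * γ) (nhdsWithin (0:ℝ) (Ioi 0)) (nhds K) := by
    rw [Metric.tendsto_nhds]
    intro ε hε
    set θ : ℝ := ((K + ε/2)/(K + ε)) ^ (1/α) with hθdef
    have hbase : (0:ℝ) < (K + ε/2)/(K + ε) := by positivity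
    have hbaselt : (K + ε/2)/(K + ε) < 1 := (div_lt_one (by linarith)).2 (by linarith)
    have hθpos : 0 < θ := Real.rpow_pos_of_pos hbase _
    have hθlt1 : θ < 1 := Real.rpow_lt_one hbase.le hbaselt (by positivity)
    have hθα : θ ^ α = (K + ε/2)/(K + ε) := by
      rw [hθdef, ← Real.rpow_mul hbase.le, one_div, inv_mul_cancel₀ (ne_of_gt hα0),
        Real.rpow_one]
    have hθαpos : 0 < θ ^ α := Real.rpow_pos_of_pos hθpos _
    have hevlow : ∀ᶠ γ in nhdsWithin (0:ℝ) (Ioi 0), K - ε < (v γ) ^ α * F (v γ) :=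
      hvF.eventually_const_lt (by linarith)
    have hevup : ∀ᶠ γ in nhdsWithin (0:ℝ) (Ioi 0),
        (θ * v γ) ^ α * F (θ * v γ) < K + ε/2 := by
      have h2 : Tendsto (fun γ => θ * v γ) (nhdsWithin (0:ℝ) (Ioi 0)) atTop :=
        hvtop.const_mul_atTop hθpos
      exact (htail.comp h2).eventually_lt_const (by linarith)
    filter_upwards [hevlow, hevup, hvtop.eventually_gt_atTop 0, self_mem_nhdsWithin]
      with γ h1 h2 hvpos hγpos
    have hγpos' : (0:ℝ) < γ := hγpos
    have hvα : 0 < (v γ) ^ α := Real.rpow_pos_of_pos hvpos _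
    rw [Real.dist_eq, abs_lt]
    constructor
    · have hFle : F (v γ) ≤ γ := hv1 γ hγpos'
      have := mul_le_mul_of_nonneg_left hFle hvα.le
      linarith
    · have hθv : θ * v γ < v γ := by nlinarith
      have hvlt : γ < F (θ * v γ) := hv2 γ hγpos' (θ * v γ) (by positivity) hθv
      have hsplit : (θ * v γ) ^ α = θ ^ α * (v γ) ^ α := Real.mul_rpow hθpos.le hvpos.le
      have h3 : (v γ) ^ α * γ < (v γ) ^ α * F (θ * v γ) := mul_lt_mul_of_pos_left hvlt hvα
      have h4 : θ ^ α * ((v γ) ^ α * F (θ * v γ)) < K + ε/2 := by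
        rw [← mul_assoc, ← hsplit]; exact h2
      have h5 : (v γ) ^ α * F (θ * v γ) < (K + ε/2)/θ ^ α := by
        rw [lt_div_iff₀ hθαpos, mul_comm]; exact h4
      have h6 : (K + ε/2)/θ ^ α = K + ε := by
        rw [hθα]
        rw [div_div_eq_mul_div, mul_comm, mul_div_assoc, div_self (by linarith : K + ε/2 ≠ 0),
          mul_one]
      linarith
  -- γ^{1/α} v γ → K^{1/α}
  have hγv : Tendsto (fun γ => γ ^ (1/α) * v γ) (nhdsWithin (0:ℝ) (Ioi 0))
      (nhds (K ^ (1/α))) := by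
    have hcont : Tendsto (fun x : ℝ => x ^ (1/α)) (nhds K) (nhds (K ^ (1/α))) :=
      (Real.continuousAt_rpow_const K (1/α) (Or.inl hK.ne')).tendsto
    have h := hcont.comp hφ
    refine Tendsto.congr' ?_ h
    filter_upwards [hvtop.eventually_gt_atTop 0, self_mem_nhdsWithin] with γ hvpos hγpos
    have hγpos' : (0:ℝ) < γ := hγpos
    show ((v γ) ^ α * γ) ^ (1/α) = γ ^ (1/α) * v γ
    rw [Real.mul_rpow (Real.rpow_nonneg hvpos.le α) hγpos'.le,
      ← Real.rpow_mul hvpos.le, mul_one_div_cancel (ne_of_gt hα0), Real.rpow_one, mul_comm]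
  -- Tail integral asymptotics
  have hA' : Tendsto (fun w : ℝ => w ^ (α - 1) * ∫ t in Ioi (0:ℝ), F (w + t)) atTop
      (nhds (K/(α-1))) := by
    rw [Metric.tendsto_atTop]
    intro ε' hε'
    set ε : ℝ := min (K/2) ((α-1) * ε'/2) with hεdef
    have hεpos : 0 < ε := lt_min (by linarith) (by positivity)
    have hεK : ε ≤ K/2 := min_le_left _ _
    have hεε' : ε ≤ (α-1)*ε'/2 := min_le_right _ _
    obtain ⟨T, hT⟩ := Metric.tendsto_atTop.1 htail ε hεpos
    set T' : ℝ := max T 1 with hT'def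
    have hT'pos : (0:ℝ) < T' := lt_of_lt_of_le one_pos (le_max_right _ _)
    have hbound : ∀ t : ℝ, T' ≤ t → (K - ε) * t ^ (-α) ≤ F t ∧ F t ≤ (K + ε) * t ^ (-α) := by
      intro t ht
      have htpos : 0 < t := lt_of_lt_of_le hT'pos ht
      have h1 := hT t (le_trans (le_max_left _ _) ht)
      rw [Real.dist_eq, abs_lt] at h1
      have htα : 0 < t ^ α := Real.rpow_pos_of_pos htpos α
      have htαneg : 0 < t ^ (-α) := Real.rpow_pos_of_pos htpos _
      have hFt : F t = t ^ (-α) * (t ^ α * F t) := by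
        rw [Real.rpow_neg htpos.le, ← mul_assoc, inv_mul_cancel₀ htα.ne', one_mul]
      constructor
      · rw [hFt, mul_comm (K - ε) (t ^ (-α))]
        exact mul_le_mul_of_nonneg_left (by linarith) htαneg.le
      · rw [hFt, mul_comm (K + ε) (t ^ (-α))]
        exact mul_le_mul_of_nonneg_left (by linarith) htαneg.le
    refine ⟨T', fun w hw => ?_⟩
    have hwpos : 0 < w := lt_of_lt_of_le hT'pos hw
    have hInt1 : IntegrableOn (fun t : ℝ => t ^ (-α)) (Ioi w) :=
      integrableOn_Ioi_rpow_of_lt (by linarith) hwpos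
    have hIntShift : IntegrableOn (fun t : ℝ => (w + t) ^ (-α)) (Ioi (0:ℝ)) :=
      aux_shift_integrableOn (f := fun t : ℝ => t ^ (-α)) (w := w) hInt1
    have hIval : ∫ t in Ioi (0:ℝ), (w + t) ^ (-α) = w ^ (1 - α) / (α - 1) := by
      rw [aux_shift_integral (fun t : ℝ => t ^ (-α)) w,
        integral_Ioi_rpow_of_lt (by linarith) hwpos]
      have h1 : (-α + 1 : ℝ) = -(α - 1) := by ring
      rw [h1, Real.rpow_neg hwpos.le, show (1:ℝ) - α = -(α-1) by ring,
        Real.rpow_neg hwpos.le, neg_div_neg_eq]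
    have hIntF : IntegrableOn (fun t : ℝ => F (w + t)) (Ioi (0:ℝ)) := by
      refine Integrable.mono' (hIntShift.const_mul (K + ε))
        ((hFmeas.comp (measurable_const_add w)).aestronglyMeasurable) ?_
      refine (ae_restrict_iff' measurableSet_Ioi).2 (Eventually.of_forall fun t ht => ?_)
      have ht0 : (0:ℝ) < t := ht
      rw [Real.norm_eq_abs, abs_of_nonneg (hFnonneg _)]
      exact (hbound (w + t) (by linarith)).2
    have hle1 : (K - ε) * (w ^ (1-α) / (α-1)) ≤ ∫ t in Ioi (0:ℝ), F (w + t) := by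
      calc (K - ε) * (w ^ (1-α) / (α-1)) = ∫ t in Ioi (0:ℝ), (K - ε) * (w + t) ^ (-α) := by
            rw [integral_const_mul, hIval]
        _ ≤ ∫ t in Ioi (0:ℝ), F (w + t) := by
            refine setIntegral_mono_on (hIntShift.const_mul _) hIntF measurableSet_Ioi
              fun t ht => ?_
            have ht0 : (0:ℝ) < t := ht
            exact (hbound (w + t) (by linarith)).1
    have hle2 : ∫ t in Ioi (0:ℝ), F (w + t) ≤ (K + ε) * (w ^ (1-α) / (α-1)) := by
      calc ∫ t in Ioi (0:ℝ), F (w + t) ≤ ∫ t in Ioi (0:ℝ), (K + ε) * (w + t) ^ (-α) := by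
            refine setIntegral_mono_on hIntF (hIntShift.const_mul _) measurableSet_Ioi
              fun t ht => ?_
            have ht0 : (0:ℝ) < t := ht
            exact (hbound (w + t) (by linarith)).2
        _ = (K + ε) * (w ^ (1-α) / (α-1)) := by rw [integral_const_mul, hIval]
    have hw1α : w ^ (α-1) * w ^ (1-α) = 1 := by
      rw [← Real.rpow_add hwpos]
      norm_num
    have hwα1 : 0 < w ^ (α-1) := Real.rpow_pos_of_pos hwpos _
    have e1 : ∀ c : ℝ, w ^ (α-1) * (c * (w ^ (1-α) / (α-1))) = c/(α-1) := by
      intro c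
      have h : w ^ (α-1) * (c * (w ^ (1-α) / (α-1))) = (w ^ (α-1) * w ^ (1-α)) * (c /(α-1)) := by
        ring
      rw [h, hw1α, one_mul]
    have hle1' : (K - ε)/(α-1) ≤ w ^ (α-1) * ∫ t in Ioi (0:ℝ), F (w + t) := by
      have := mul_le_mul_of_nonneg_left hle1 hwα1.le
      rwa [e1] at this
    have hle2' : w ^ (α-1) * (∫ t in Ioi (0:ℝ), F (w + t)) ≤ (K + ε)/(α-1) := by
      have := mul_le_mul_of_nonneg_left hle2 hwα1.le
      rwa [e1] at this
    rw [Real.dist_eq]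
    have hsub1 : (K - ε)/(α-1) = K/(α-1) - ε/(α-1) := by ring
    have hsub2 : (K + ε)/(α-1) = K/(α-1) + ε/(α-1) := by ring
    have hfin : |w ^ (α-1) * (∫ t in Ioi (0:ℝ), F (w + t)) - K/(α-1)| ≤ ε/(α-1) := by
      rw [abs_le]
      constructor <;> [linarith [hle1']; linarith [hle2']]
    have hlt : ε/(α-1) < ε' := by
      rw [div_lt_iff₀ hα1]
      nlinarith
    linarith
  -- the ratio A'(w)/(w F(w)) tends to 1/(α-1)
  have hratio : Tendsto (fun w : ℝ => (∫ t in Ioi (0:ℝ), F (w + t)) / (w * F w)) atTop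
      (nhds (1/(α-1))) := by
    have h := hA'.div htail hK.ne'
    have hlim : (K/(α-1))/K = 1/(α-1) := by
      rw [div_div, mul_comm, ← div_div, div_self hK.ne']
    rw [hlim] at h
    refine Tendsto.congr' ?_ h
    filter_upwards [eventually_gt_atTop (0:ℝ)] with w hw
    show (w ^ (α-1) * ∫ t in Ioi (0:ℝ), F (w + t)) / (w ^ α * F w)
        = (∫ t in Ioi (0:ℝ), F (w + t)) / (w * F w)
    have hwα : w ^ α = w ^ (α-1) * w := by
      have h' := Real.rpow_add_one hw.ne' (α-1)
      rwa [show α - 1 + 1 = α by ring] at h'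
    have hwα1pos : 0 < w ^ (α-1) := Real.rpow_pos_of_pos hw _
    rw [hwα, mul_assoc, mul_div_mul_left _ _ (ne_of_gt hwα1pos)]
  -- threshold T1
  obtain ⟨T0, hT0⟩ := eventually_atTop.1 (htail.eventually_const_lt (half_lt_self hK))
  obtain ⟨T2, hT2⟩ := Metric.tendsto_atTop.1 htail 1 one_pos
  set T1 : ℝ := max (max T0 T2) 1 with hT1def
  have hT1pos : (0:ℝ) < T1 := lt_of_lt_of_le one_pos (le_max_right _ _)
  have hFpos : ∀ w : ℝ, T1 ≤ w → 0 < F w := by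
    intro w hw
    have h1 := hT0 w (le_trans (le_trans (le_max_left _ _) (le_max_left _ _)) hw)
    have hwpos : 0 < w := lt_of_lt_of_le hT1pos hw
    nlinarith [Real.rpow_pos_of_pos hwpos α, hFnonneg w]
  have hboundT1 : ∀ t : ℝ, T1 ≤ t → F t ≤ (K+1) * t ^ (-α) := by
    intro t ht
    have htpos : 0 < t := lt_of_lt_of_le hT1pos ht
    have h1 := hT2 t (le_trans (le_trans (le_max_right T0 T2) (le_max_left _ _)) ht)
    rw [Real.dist_eq, abs_lt] at h1
    have htα : 0 < t ^ α := Real.rpow_pos_of_pos htpos α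
    have htαneg : 0 < t ^ (-α) := Real.rpow_pos_of_pos htpos _
    have hFt : F t = t ^ (-α) * (t ^ α * F t) := by
      rw [Real.rpow_neg htpos.le, ← mul_assoc, inv_mul_cancel₀ htα.ne', one_mul]
    rw [hFt, mul_comm (K+1) (t ^ (-α))]
    exact mul_le_mul_of_nonneg_left (by linarith) htαneg.le
  -- finiteness of the tail lintegral
  have hFinTail : (∫⁻ t in Ioi (0:ℝ), ℙ {ω | X ω > t}) < ⊤ := by
    have hsplit : (Ioi (0:ℝ)) = Ioc 0 T1 ∪ Ioi T1 := (Ioc_union_Ioi_eq_Ioi hT1pos.le).symm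
    rw [hsplit, lintegral_union measurableSet_Ioi Ioc_disjoint_Ioi_same]
    refine ENNReal.add_lt_top.2 ⟨?_, ?_⟩
    · calc ∫⁻ t in Ioc (0:ℝ) T1, ℙ {ω | X ω > t}
          ≤ ∫⁻ _ in Ioc (0:ℝ) T1, 1 := lintegral_mono (fun t => prob_le_one)
        _ = volume (Ioc (0:ℝ) T1) := setLIntegral_one _
        _ < ⊤ := by rw [Real.volume_Ioc]; exact ENNReal.ofReal_lt_top
    · have hintb : IntegrableOn (fun t : ℝ => (K+1) * t ^ (-α)) (Ioi T1) :=
        (integrableOn_Ioi_rpow_of_lt (by linarith) hT1pos).const_mul _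
      calc ∫⁻ t in Ioi T1, ℙ {ω | X ω > t}
          ≤ ∫⁻ t in Ioi T1, ENNReal.ofReal ((K+1) * t ^ (-α)) := by
            refine lintegral_mono_ae ((ae_restrict_iff' measurableSet_Ioi).2
              (Eventually.of_forall fun t ht => ?_))
            have ht' : T1 < t := ht
            calc ℙ {ω | X ω > t}
                = ENNReal.ofReal (F t) := (ENNReal.ofReal_toReal (measure_ne_top _ _)).symm
              _ ≤ ENNReal.ofReal ((K+1) * t ^ (-α)) :=
                  ENNReal.ofReal_le_ofReal (hboundT1 t ht'.le)
        _ < ⊤ := hintb.lintegral_lt_top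
  -- integrability of (X - w)⁺
  have hIntg : ∀ w : ℝ, 0 ≤ w → Integrable (fun ω => max (X ω - w) 0) ℙ := by
    intro w hw0
    have hgmeas : Measurable (fun ω => max (X ω - w) 0) :=
      (hXmeas.sub measurable_const).max measurable_const
    have hgnn : 0 ≤ᵐ[ℙ] (fun ω => max (X ω - w) 0) :=
      Eventually.of_forall (fun ω => le_max_right _ _)
    refine ⟨hgmeas.aestronglyMeasurable, (hasFiniteIntegral_iff_ofReal hgnn).2 ?_⟩
    rw [lintegral_eq_lintegral_meas_lt ℙ hgnn hgmeas.aemeasurable]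
    refine lt_of_le_of_lt ?_ hFinTail
    refine lintegral_mono_ae ((ae_restrict_iff' measurableSet_Ioi).2
      (Eventually.of_forall fun t ht => ?_))
    have ht' : (0:ℝ) < t := ht
    refine measure_mono fun ω hω => ?_
    simp only [mem_setOf_eq] at hω ⊢
    have hlt : t < X ω - w := by
      rcases max_cases (X ω - w) 0 with ⟨heq, _⟩ | ⟨heq, _⟩
      · rwa [heq] at hω
      · rw [heq] at hω; linarith
    linarith
  -- layer cake
  have hlayer : ∀ w : ℝ, 0 ≤ w → (∫ ω, max (X ω - w) 0 ∂ℙ) = ∫ t in Ioi (0:ℝ), F (w + t) := by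
    intro w hw0
    have hgnn : 0 ≤ᵐ[ℙ] (fun ω => max (X ω - w) 0) :=
      Eventually.of_forall (fun ω => le_max_right _ _)
    rw [(hIntg w hw0).integral_eq_integral_meas_lt hgnn]
    refine setIntegral_congr_fun measurableSet_Ioi fun t ht => ?_
    have ht' : (0:ℝ) < t := ht
    have hset : {a | t < max (X a - w) 0} = {ω | X ω > w + t} := by
      ext ω
      simp only [mem_setOf_eq]
      constructor
      · intro hω
        have hlt : t < X ω - w := by
          rcases max_cases (X ω - w) 0 with ⟨heq, _⟩ | ⟨heq, _⟩
          · rwa [heq] at hω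
          · rw [heq] at hω; linarith
        linarith
      · intro hω
        exact lt_of_lt_of_le (by linarith) (le_max_left _ _)
    rw [hset]; rfl
  -- the tail expectation identity
  have hsmeas : ∀ w : ℝ, MeasurableSet {ω | X ω > w} := fun w =>
    measurableSet_lt measurable_const hXmeas
  have hCoTEnum : ∀ w : ℝ, 0 ≤ w → (∫ ω in {ω | X ω > w}, X ω ∂ℙ)
      = w * F w + ∫ t in Ioi (0:ℝ), F (w + t) := by
    intro w hw0
    have hg := hIntg w hw0
    have h1 : (∫ ω in {ω | X ω > w}, X ω ∂ℙ)
        = ∫ ω in {ω | X ω > w}, (max (X ω - w) 0 + w) ∂ℙ := by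
      refine setIntegral_congr_fun (hsmeas w) fun ω hω => ?_
      have hω' : w < X ω := hω
      rw [max_eq_left (by linarith)]
      ring
    rw [h1, integral_add hg.integrableOn
      (integrableOn_const (measure_ne_top _ _))]
    rw [setIntegral_const, smul_eq_mul]
    have h2 : (∫ ω in {ω | X ω > w}, max (X ω - w) 0 ∂ℙ) = ∫ ω, max (X ω - w) 0 ∂ℙ :=
      setIntegral_eq_integral_of_forall_compl_eq_zero fun ω hω => by
        simp only [mem_setOf_eq, not_lt] at hω
        exact max_eq_right (by linarith)
    rw [h2, hlayer w hw0]
    have h3 : ℙ.real {ω | X ω > w} = F w := rfl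
    rw [h3]
    ring
  -- final assembly
  have hmain : ∀ᶠ γ in nhdsWithin (0:ℝ) (Ioi 0), γ ^ (1/α) * CoTE ℙ X γ
      = (γ ^ (1/α) * v γ) * (1 + (∫ t in Ioi (0:ℝ), F (v γ + t)) / (v γ * F (v γ))) := by
    filter_upwards [hvtop.eventually_ge_atTop T1, hvtop.eventually_gt_atTop 0,
      self_mem_nhdsWithin] with γ hvT1 hvpos hγpos
    have hFv : 0 < F (v γ) := hFpos _ hvT1
    have hCeq : CoTE ℙ X γ = (∫ ω in {ω | X ω > v γ}, X ω ∂ℙ) / F (v γ) := rfl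
    have hc : CoTE ℙ X γ = v γ + (∫ t in Ioi (0:ℝ), F (v γ + t)) / F (v γ) := by
      rw [hCeq, hCoTEnum (v γ) (hv0 γ hγpos), add_div, mul_div_cancel_right₀ _ hFv.ne']
    rw [hc]
    field_simp
  have h1α : K ^ (1/α) * (1 + 1/(α-1)) = α/(α-1) * K ^ (1/α) := by
    field_simp
    ring
  have hT : Tendsto (fun γ => (γ ^ (1/α) * v γ) *
      (1 + (∫ t in Ioi (0:ℝ), F (v γ + t)) / (v γ * F (v γ)))) (nhdsWithin (0:ℝ) (Ioi 0))
      (nhds (K ^ (1/α) * (1 + 1/(α-1)))) :=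
    hγv.mul (tendsto_const_nhds.add (hratio.comp hvtop))
  rw [← h1α]
  exact Tendsto.congr' (EventuallyEq.symm hmain) hT
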